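/- Let M_u, W_u ∈ ℝ^{n_u×n_u} and M_z, W_z ∈ ℝ^{n_z×n_z} be symmetric positive definite, z̃, z_1, …, z_N ∈ ℝ^{n_z}, A = (A_1; …; A_N) with A_ℓ = (I_{n_u}, I_{n_u} ⊗ z_ℓᵀM_z), and W_θ the block prior precision matrix [[W_u, W_u ⊗ z̃ᵀM_z], [W_u ⊗ M_z z̃, W_u ⊗ (W_z + M_z z̃ z̃ᵀ M_z)]]. Suppose X = (x_1 ⋯ x_{n_u}) satisfies Xᵀ M_u X = I_{n_u} and W_u x_j = λ_j M_u x_j with λ_j > 0 for all j. Let Z = (z_1 ⋯ z_N) and e ∈ ℝ^N the vector of ones. Then for every g ∈ ℝ^N and every j, setting y = Z g − (eᵀg) z̃ and s = eᵀg − yᵀ M_z W_z^{-1} M_z z̃, one has W_θ^{-1} Aᵀ (I_N ⊗ M_u)(g ⊗ x_j) = (1/λ_j) · (s x_j ; x_j ⊗ W_z^{-1} M_z y). In particular, if G g = μ g with μ > 0, the right generalized singular vector ψ = (1/√(μ λ_j)) (s x_j ; x_j ⊗ W_z^{-1} M_z y) satisfies W_θ^{-1} Aᵀ (I_N ⊗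 M_u)(g ⊗ x_j) = √(μ/λ_j) ψ. -/

import Mathlib

open Matrix
open scoped Kronecker

/-- `Wu ⊗ vᵀ` : the Kronecker product of `Wu` with a row vector `vᵀ`
(the trivial row index is suppressed). -/
def kronRow {nu nz : ℕ} (Wu : Matrix (Fin nu) (Fin nu) ℝ) (v : Fin nz → ℝ) :
    Matrix (Fin nu) (Fin nu × Fin nz) ℝ :=
  Matrix.of fun i p => Wu i p.1 * v p.2

/-- `Wu ⊗ v` : the Kronecker product of `Wu` with a column vector `v`
(the trivial column index is suppressed). -/
def kronCol {nu nz : ℕ} (Wu : Matrix (Fin nu) (Fin nu) ℝ) (v : Fin nz → ℝ) :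
    Matrix (Fin nu × Fin nz) (Fin nu) ℝ :=
  Matrix.of fun p i => Wu p.1 i * v p.2

/-- The prior precision matrix
`Wθ = [[Wu, Wu ⊗ z̃ᵀMz], [Wu ⊗ Mz z̃, Wu ⊗ (Wz + Mz z̃ z̃ᵀ Mz)]]`,
acting on `ℝ^{nu} ⊕ ℝ^{nu × nz} ≅ ℝ^{nu(nz+1)}`. -/
noncomputable def Wtheta {nu nz : ℕ} (Wu : Matrix (Fin nu) (Fin nu) ℝ)
    (Wz Mz : Matrix (Fin nz) (Fin nz) ℝ) (zt : Fin nz → ℝ) :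
    Matrix (Fin nu ⊕ Fin nu × Fin nz) (Fin nu ⊕ Fin nu × Fin nz) ℝ :=
  Matrix.fromBlocks Wu (kronRow Wu (zt ᵥ* Mz)) (kronCol Wu (Mz *ᵥ zt))
    (Wu ⊗ₖ (Wz + Matrix.vecMulVec (Mz *ᵥ zt) (zt ᵥ* Mz)))

/-- The discrepancy forward operator `A(z) = (I_{nu}, I_{nu} ⊗ zᵀMz)`. -/
noncomputable def Aop {nu nz : ℕ} (Mz : Matrix (Fin nz) (Fin nz) ℝ) (z : Fin nz → ℝ) :
    Matrix (Fin nu) (Fin nu ⊕ Fin nu × Fin nz) ℝ :=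
  Matrix.of fun i q =>
    Sum.elim (fun i' => (1 : Matrix (Fin nu) (Fin nu) ℝ) i i')
      (fun p => (1 : Matrix (Fin nu) (Fin nu) ℝ) i p.1 * (z ᵥ* Mz) p.2) q

/-- The vertical stacking `A = (A_1; …; A_N)` of the forward operators `A_ℓ = A(z_ℓ)`. -/
noncomputable def Astack {nu nz N : ℕ} (Mz : Matrix (Fin nz) (Fin nz) ℝ)
    (z : Fin N → Fin nz → ℝ) :
    Matrix (Fin N × Fin nu) (Fin nu ⊕ Fin nu × Fin nz) ℝ :=
  Matrix.of fun p q => Aop Mz (z p.1) p.2 q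

/-- The data matrix `Z = (z_1 ⋯ z_N)` whose columns are the design points. -/
def Zmat {nz N : ℕ} (z : Fin N → Fin nz → ℝ) : Matrix (Fin nz) (Fin N) ℝ :=
  Matrix.of fun i ℓ => z ℓ i

/-- The Gram matrix `G = e eᵀ + (Z − z̃eᵀ)ᵀ Mz Wz⁻¹ Mz (Z − z̃eᵀ)`. -/
noncomputable def Gmat {nz N : ℕ} (Mz Wz : Matrix (Fin nz) (Fin nz) ℝ)
    (zt : Fin nz → ℝ) (z : Fin N → Fin nz → ℝ) : Matrix (Fin N) (Fin N) ℝ :=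
  Matrix.vecMulVec (fun _ => 1) (fun _ => 1) +
    (Zmat z - Matrix.of fun i (_ : Fin N) => zt i)ᵀ * (Mz * Wz⁻¹ * Mz) *
      (Zmat z - Matrix.of fun i (_ : Fin N) => zt i)

section aux
variable {nu nz N : ℕ}

lemma kronRow_mulVec (Wu : Matrix (Fin nu) (Fin nu) ℝ) (vv : Fin nz → ℝ)
    (a : Fin nu → ℝ) (b : Fin nz → ℝ) :
    kronRow Wu vv *ᵥ (fun p => a p.1 * b p.2) = (vv ⬝ᵥ b) • (Wu *ᵥ a) := by
  funext i
  simp only [kronRow, Matrix.mulVec, dotProduct, Matrix.of_apply, Pi.smul_apply,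
    smul_eq_mul, Fintype.sum_prod_type, Finset.mul_sum, Finset.sum_mul]
  exact Finset.sum_congr rfl fun k _ => Finset.sum_congr rfl fun i' _ => by ring

lemma kronCol_mulVec (Wu : Matrix (Fin nu) (Fin nu) ℝ) (vv : Fin nz → ℝ)
    (a : Fin nu → ℝ) :
    kronCol Wu vv *ᵥ a = fun p => (Wu *ᵥ a) p.1 * vv p.2 := by
  funext p
  simp only [kronCol, Matrix.mulVec, dotProduct, Matrix.of_apply, Finset.sum_mul]
  exact Finset.sum_congr rfl fun i' _ => by ring

lemma kron_mulVec {m n : Type*} [Fintype m] [Fintype n]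
    (A : Matrix m m ℝ) (C : Matrix n n ℝ) (a : m → ℝ) (b : n → ℝ) :
    (A ⊗ₖ C) *ᵥ (fun p => a p.1 * b p.2) = fun p => (A *ᵥ a) p.1 * (C *ᵥ b) p.2 := by
  funext p
  simp only [Matrix.mulVec, dotProduct, Matrix.kroneckerMap_apply,
    Fintype.sum_prod_type, Finset.mul_sum, Finset.sum_mul]
  rw [Finset.sum_comm]
  exact Finset.sum_congr rfl fun i' _ => Finset.sum_congr rfl fun k _ => by ring

lemma vecMulVec_mulVec' (u : Fin nz → ℝ) (v : Fin nz → ℝ) (w : Fin nz → ℝ) :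
    Matrix.vecMulVec u v *ᵥ w = (v ⬝ᵥ w) • u := by
  funext k
  simp only [Matrix.mulVec, dotProduct, Matrix.vecMulVec_apply, Pi.smul_apply,
    smul_eq_mul, Finset.sum_mul, Finset.mul_sum]
  exact Finset.sum_congr rfl fun k' _ => by ring

lemma smul_sum_elim {γ : Type*} [SMul ℝ γ] (c : ℝ) {α β : Type*} (f : α → γ) (g : β → γ) :
    c • Sum.elim f g = Sum.elim (c • f) (c • g) := by
  funext p; cases p <;> rfl

lemma mul_kronRow (Wu : Matrix (Fin nu) (Fin nu) ℝ) (v : Fin nz → ℝ) :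
    Wu * (kronRow 1 v : Matrix (Fin nu) (Fin nu × Fin nz) ℝ) = kronRow Wu v := by
  ext i p
  simp [kronRow, Matrix.mul_apply, Matrix.one_apply, Finset.sum_ite_eq, mul_ite]

lemma kronCol_mul (Wu : Matrix (Fin nu) (Fin nu) ℝ) (v : Fin nz → ℝ) :
    (kronCol 1 v : Matrix (Fin nu × Fin nz) (Fin nu) ℝ) * Wu = kronCol Wu v := by
  ext p i
  simp only [kronCol, Matrix.mul_apply, Matrix.of_apply, Matrix.one_apply, ite_mul, one_mul,
    zero_mul, mul_comm]
  simp [Finset.sum_ite_eq, mul_comm]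

lemma kronCol_mul_kronRow (Wu : Matrix (Fin nu) (Fin nu) ℝ) (w v : Fin nz → ℝ) :
    HMul.hMul (self := Matrix.instHMulOfFintypeOfMulOfAddCommMonoid) (kronCol Wu w) (kronRow 1 v) = Wu ⊗ₖ Matrix.vecMulVec w v := by
  ext p q
  simp only [kronCol, kronRow, Matrix.mul_apply, Matrix.of_apply, Matrix.one_apply,
    Matrix.kroneckerMap_apply, Matrix.vecMulVec_apply]
  rw [Finset.sum_eq_single q.1]
  · simp; ring
  · intro b _ hb; simp [hb]
  · simp

lemma dot_symm {n : Type*} [Fintype n] (S : Matrix n n ℝ) (hS : Sᵀ = S) (a b : n → ℝ) :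
    a ⬝ᵥ (S *ᵥ b) = b ⬝ᵥ (S *ᵥ a) := by
  rw [Matrix.dotProduct_mulVec]
  rw [show a ᵥ* S = S *ᵥ a by rw [← hS, Matrix.vecMul_transpose, hS]]
  exact dotProduct_comm _ _

lemma Wtheta_factor (Wu : Matrix (Fin nu) (Fin nu) ℝ)
    (Wz Mz : Matrix (Fin nz) (Fin nz) ℝ) (zt : Fin nz → ℝ) :
    Wtheta Wu Wz Mz zt =
      Matrix.fromBlocks 1 0 (kronCol 1 (Mz *ᵥ zt)) 1 *
        Matrix.fromBlocks Wu 0 0 (Wu ⊗ₖ Wz) *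
          Matrix.fromBlocks 1 (kronRow 1 (zt ᵥ* Mz)) 0 1 := by
  rw [Matrix.fromBlocks_multiply, Matrix.fromBlocks_multiply]
  simp only [Matrix.one_mul, Matrix.mul_one, Matrix.zero_mul, Matrix.mul_zero,
    add_zero, zero_add, kronCol_mul, mul_kronRow, kronCol_mul_kronRow]
  rw [Wtheta, Matrix.kronecker_add, add_comm (Wu ⊗ₖ Wz)]

lemma Wtheta_det_isUnit (Wu : Matrix (Fin nu) (Fin nu) ℝ)
    (Wz Mz : Matrix (Fin nz) (Fin nz) ℝ) (zt : Fin nz → ℝ)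
    (hWu : Wu.PosDef) (hWz : Wz.PosDef) :
    IsUnit (Wtheta Wu Wz Mz zt).det := by
  rw [Wtheta_factor, Matrix.det_mul, Matrix.det_mul,
    Matrix.det_fromBlocks_zero₁₂, Matrix.det_fromBlocks_zero₂₁,
    Matrix.det_fromBlocks_zero₂₁, Matrix.det_one, Matrix.det_one, Matrix.det_kronecker]
  have h1 := hWu.det_pos
  have h2 := hWz.det_pos
  have : (0:ℝ) < Wu.det * (Wu.det ^ Fintype.card (Fin nz) * Wz.det ^ Fintype.card (Fin nu)) :=
    by positivity
  simpa using this.ne'.isUnit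

lemma Astack_transpose_mulVec (Mz : Matrix (Fin nz) (Fin nz) ℝ) (hMz : Mzᵀ = Mz)
    (z : Fin N → Fin nz → ℝ) (g : Fin N → ℝ) (u : Fin nu → ℝ) :
    (Astack Mz z)ᵀ *ᵥ (fun p => g p.1 * u p.2)
      = Sum.elim ((∑ ℓ, g ℓ) • u)
          (fun p => u p.1 * (Mz *ᵥ (Zmat z *ᵥ g)) p.2) := by
  have hMz' : ∀ a b, Mz a b = Mz b a := fun a b => by
    conv_lhs => rw [← hMz]
    rw [Matrix.transpose_apply]
  funext q
  cases q with
  | inl i =>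
    simp only [Matrix.mulVec, dotProduct, Matrix.transpose_apply, Astack, Aop,
      Matrix.of_apply, Sum.elim_inl, Fintype.sum_prod_type, Matrix.one_apply,
      Pi.smul_apply, smul_eq_mul, Finset.sum_mul]
    refine Finset.sum_congr rfl fun ℓ _ => ?_
    simp [Finset.mul_sum, Finset.sum_ite_eq, mul_comm]
  | inr p =>
    simp only [Matrix.mulVec, dotProduct, Matrix.transpose_apply, Astack, Aop,
      Matrix.of_apply, Sum.elim_inr, Fintype.sum_prod_type, Matrix.one_apply,
      Matrix.vecMul, Zmat, Finset.mul_sum]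
    rw [Finset.sum_comm]
    rw [Finset.sum_eq_single p.1]
    · simp only [if_true, one_mul]
      rw [Finset.sum_comm]
      refine Finset.sum_congr rfl fun ℓ _ => ?_
      simp only [dotProduct, Matrix.of_apply, Finset.mul_sum, Finset.sum_mul]
      refine Finset.sum_congr rfl fun k _ => ?_
      rw [hMz' k p.2]; ring
    · intro b _ hb; simp [hb]
    · simp
end aux

/-- Action of `Wθ⁻¹ Aᵀ (I_N ⊗ Mu)` on the Kronecker vector `g ⊗ x_j`:
`Wθ⁻¹ Aᵀ (I_N ⊗ Mu)(g ⊗ x_j) = (1/λ_j) (s x_j ; x_j ⊗ Wz⁻¹ Mz y)` where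
`y = Z g − (eᵀg) z̃` and `s = eᵀg − yᵀ Mz Wz⁻¹ Mz z̃`.  In particular, if `G g = μ g`
with `μ > 0`, this equals `√(μ/λ_j) ψ` for the right generalized singular vector
`ψ = (1/√(μ λ_j)) (s x_j ; x_j ⊗ Wz⁻¹ Mz y)`. -/
theorem right_singular_vector_formula
    {nu nz N : ℕ}
    (Mu Wu : Matrix (Fin nu) (Fin nu) ℝ) (Mz Wz : Matrix (Fin nz) (Fin nz) ℝ)
    (hMu : Mu.PosDef) (hWu : Wu.PosDef) (hMz : Mz.PosDef) (hWz : Wz.PosDef)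
    (zt : Fin nz → ℝ) (z : Fin N → Fin nz → ℝ)
    (x : Fin nu → Fin nu → ℝ) (lam : Fin nu → ℝ)
    (hX : (Matrix.of fun i j => x j i)ᵀ * Mu * (Matrix.of fun i j => x j i) = 1)
    (heig : ∀ j, Wu *ᵥ x j = lam j • (Mu *ᵥ x j)) (hlam : ∀ j, 0 < lam j) :
    ∀ (g : Fin N → ℝ) (j : Fin nu) (y : Fin nz → ℝ) (s : ℝ),
      y = Zmat z *ᵥ g - (∑ ℓ, g ℓ) • zt →
      s = (∑ ℓ, g ℓ) - y ⬝ᵥ (Mz *ᵥ (Wz⁻¹ *ᵥ (Mz *ᵥ zt))) →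
      ((Wtheta Wu Wz Mz zt)⁻¹ *ᵥ ((Astack Mz z)ᵀ *ᵥ
            ((((1 : Matrix (Fin N) (Fin N) ℝ) ⊗ₖ Mu)) *ᵥ fun p => g p.1 * x j p.2))
          = (1 / lam j) •
            Sum.elim (s • x j) (fun p => x j p.1 * (Wz⁻¹ *ᵥ (Mz *ᵥ y)) p.2)) ∧
      ∀ μ : ℝ, 0 < μ → Gmat Mz Wz zt z *ᵥ g = μ • g →
        (Wtheta Wu Wz Mz zt)⁻¹ *ᵥ ((Astack Mz z)ᵀ *ᵥ
            ((((1 : Matrix (Fin N) (Fin N) ℝ) ⊗ₖ Mu)) *ᵥ fun p => g p.1 * x j p.2))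
          = Real.sqrt (μ / lam j) •
            ((1 / Real.sqrt (μ * lam j)) •
              Sum.elim (s • x j) (fun p => x j p.1 * (Wz⁻¹ *ᵥ (Mz *ᵥ y)) p.2)) := by
  intro g j y s hy hs
  have hlj : lam j ≠ 0 := (hlam j).ne'
  have hMzsymm : Mzᵀ = Mz := hMz.isHermitian.eq
  have hWzsymm : Wzᵀ = Wz := hWz.isHermitian.eq
  have hWzdet : IsUnit Wz.det := hWz.det_pos.ne'.isUnit
  have hWzinv_symm : (Wz⁻¹)ᵀ = Wz⁻¹ := by
    rw [Matrix.transpose_nonsing_inv, hWzsymm]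
  set w : Fin nz → ℝ := Wz⁻¹ *ᵥ (Mz *ᵥ y) with hw
  set Mux : Fin nu → ℝ := Mu *ᵥ x j with hMux
  set S : Matrix (Fin nz) (Fin nz) ℝ := Mz * Wz⁻¹ * Mz with hSdef
  have hS : Sᵀ = S := by
    rw [hSdef, Matrix.transpose_mul, Matrix.transpose_mul, hMzsymm, hWzinv_symm,
      Matrix.mul_assoc]
  have hScomp : ∀ u : Fin nz → ℝ, Mz *ᵥ (Wz⁻¹ *ᵥ (Mz *ᵥ u)) = S *ᵥ u := by
    intro u
    rw [Matrix.mulVec_mulVec, Matrix.mulVec_mulVec]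
  -- key scalar identity
  have key1 : (zt ᵥ* Mz) ⬝ᵥ w = y ⬝ᵥ (Mz *ᵥ (Wz⁻¹ *ᵥ (Mz *ᵥ zt))) := by
    rw [hScomp]
    rw [hw, ← Matrix.dotProduct_mulVec, hScomp]
    exact dot_symm S hS zt y
  have key2 : s + (zt ᵥ* Mz) ⬝ᵥ w = ∑ ℓ, g ℓ := by
    rw [key1, hs]; ring
  have hWzw : Wz *ᵥ w = Mz *ᵥ y := by
    rw [hw, Matrix.mulVec_mulVec, Matrix.mul_nonsing_inv _ hWzdet, Matrix.one_mulVec]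
  have hMzy : Mz *ᵥ y + (∑ ℓ, g ℓ) • (Mz *ᵥ zt) = Mz *ᵥ (Zmat z *ᵥ g) := by
    rw [hy, Matrix.mulVec_sub, Matrix.mulVec_smul]
    abel
  -- the right-hand side vector
  set V : (Fin nu ⊕ Fin nu × Fin nz) → ℝ :=
    (1 / lam j) • Sum.elim (s • x j) (fun p => x j p.1 * w p.2) with hV
  -- the data vector
  have hb : (Astack Mz z)ᵀ *ᵥ
      ((((1 : Matrix (Fin N) (Fin N) ℝ) ⊗ₖ Mu)) *ᵥ fun p => g p.1 * x j p.2)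
      = Sum.elim ((∑ ℓ, g ℓ) • Mux)
          (fun p => Mux p.1 * (Mz *ᵥ (Zmat z *ᵥ g)) p.2) := by
    rw [kron_mulVec, Matrix.one_mulVec]
    exact Astack_transpose_mulVec Mz hMzsymm z g (Mu *ᵥ x j)
  -- the main computation: Wθ V = b
  have hWv : Wtheta Wu Wz Mz zt *ᵥ V
      = Sum.elim ((∑ ℓ, g ℓ) • Mux)
          (fun p => Mux p.1 * (Mz *ᵥ (Zmat z *ᵥ g)) p.2) := by
    have hCw : (Wz + Matrix.vecMulVec (Mz *ᵥ zt) (zt ᵥ* Mz)) *ᵥ w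
        = Mz *ᵥ y + ((zt ᵥ* Mz) ⬝ᵥ w) • (Mz *ᵥ zt) := by
      rw [Matrix.add_mulVec, hWzw, vecMulVec_mulVec']
    have eqTop : Wu *ᵥ ((1 / lam j) • (s • x j))
        + kronRow Wu (zt ᵥ* Mz) *ᵥ ((1 / lam j) • fun p => x j p.1 * w p.2)
        = (∑ ℓ, g ℓ) • Mux := by
      rw [Matrix.mulVec_smul, Matrix.mulVec_smul, Matrix.mulVec_smul, kronRow_mulVec,
        heig j, smul_smul, smul_smul, smul_smul, smul_smul, ← add_smul, ← hMux]
      congr 1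
      field_simp
      linear_combination key2
    have eqBot : kronCol Wu (Mz *ᵥ zt) *ᵥ ((1 / lam j) • (s • x j))
        + (Wu ⊗ₖ (Wz + Matrix.vecMulVec (Mz *ᵥ zt) (zt ᵥ* Mz))) *ᵥ
            ((1 / lam j) • fun p => x j p.1 * w p.2)
        = fun p => Mux p.1 * (Mz *ᵥ (Zmat z *ᵥ g)) p.2 := by
      rw [Matrix.mulVec_smul, Matrix.mulVec_smul, Matrix.mulVec_smul, kron_mulVec,
        kronCol_mulVec, heig j, hCw]
      funext p
      have hZg : (Mz *ᵥ (Zmat z *ᵥ g)) p.2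
          = (Mz *ᵥ y) p.2 + (∑ ℓ, g ℓ) * (Mz *ᵥ zt) p.2 := by
        rw [← hMzy]; simp
      simp only [Pi.add_apply, Pi.smul_apply, smul_eq_mul, hZg, ← hMux]
      field_simp
      linear_combination (Mux p.1 * (Mz *ᵥ zt) p.2) * key2
    rw [hV, smul_sum_elim, Wtheta, Matrix.fromBlocks_mulVec, Sum.elim_comp_inl,
      Sum.elim_comp_inr, eqTop, eqBot]
  have hdet := Wtheta_det_isUnit Wu Wz Mz zt hWu hWz
  have h1 : (Wtheta Wu Wz Mz zt)⁻¹ *ᵥ ((Astack Mz z)ᵀ *ᵥ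
        ((((1 : Matrix (Fin N) (Fin N) ℝ) ⊗ₖ Mu)) *ᵥ fun p => g p.1 * x j p.2)) = V := by
    rw [hb, ← hWv, Matrix.mulVec_mulVec, Matrix.nonsing_inv_mul _ hdet, Matrix.one_mulVec]
  refine ⟨h1, ?_⟩
  intro μ hμ _
  rw [h1, hV, smul_smul]
  congr 1
  have hsm : Real.sqrt μ ≠ 0 := (Real.sqrt_pos.mpr hμ).ne'
  have h2 : Real.sqrt (lam j) * Real.sqrt (lam j) = lam j := Real.mul_self_sqrt (hlam j).le
  rw [one_div, one_div, Real.sqrt_div hμ.le, Real.sqrt_mul hμ.le, div_eq_mul_inv]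
  rw [show Real.sqrt μ * (Real.sqrt (lam j))⁻¹ * (Real.sqrt μ * Real.sqrt (lam j))⁻¹
      = (Real.sqrt μ * (Real.sqrt μ)⁻¹) * (Real.sqrt (lam j) * Real.sqrt (lam j))⁻¹ by
    rw [mul_inv, mul_inv]; ring]
  rw [mul_inv_cancel₀ hsm, h2, one_mul]
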